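/- Let d be a positive integer, let K > 0 be a real number, and let A be a finite nonempty subset of ℝ^d whose affine span is all of ℝ^d (i.e. A is not contained in any proper affine subspace of ℝ^d). If |A + A| ≤ K·|A|, then d ≤ K − 1 + d(d+1)/(2|A|). (Freiman's lemma.) -/

import Mathlib

open Pointwise Matrix Module




lemma freiman_exists_generic_finset {d : ℕ} (D : Finset (Fin d → ℝ)) :
    ∃ u : Fin d → ℝ, ∀ v ∈ D, v ≠ 0 → u ⬝ᵥ v ≠ 0 := by
  classical
  induction D using Finset.induction_on with
  | empty => exact ⟨0, by simp⟩
  | @insert v D hvD ih =>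
    obtain ⟨u, hu⟩ := ih
    by_cases hv : v = 0
    · refine ⟨u, ?_⟩
      intro w hw hw0
      rcases Finset.mem_insert.mp hw with rfl | hw
      · exact absurd hv hw0
      · exact hu w hw hw0
    · have hBfin : (((insert v D : Finset _) : Set (Fin d → ℝ)).image
          (fun w => -(u ⬝ᵥ w) / (v ⬝ᵥ w))).Finite :=
        ((insert v D : Finset _).finite_toSet).image _
      obtain ⟨t, ht⟩ := hBfin.infinite_compl.nonempty
      refine ⟨u + t • v, ?_⟩
      intro w hw hw0
      have hcalc : (u + t • v) ⬝ᵥ w = u ⬝ᵥ w + t * (v ⬝ᵥ w) := by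
        rw [add_dotProduct, smul_dotProduct, smul_eq_mul]
      rw [hcalc]
      by_cases hvw : v ⬝ᵥ w = 0
      · have hwD : w ∈ D := by
          rcases Finset.mem_insert.mp hw with rfl | h
          · exact absurd (dotProduct_self_eq_zero.mp hvw) hw0
          · exact h
        simpa [hvw] using hu w hwD hw0
      · intro hzero
        apply ht
        refine ⟨w, by simpa using hw, ?_⟩
        field_simp
        linarith

lemma freiman_exists_generic {d : ℕ} (D : Set (Fin d → ℝ)) (hD : D.Finite) :
    ∃ u : Fin d → ℝ, ∀ v ∈ D, v ≠ 0 → u ⬝ᵥ v ≠ 0 := by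
  obtain ⟨u, hu⟩ := freiman_exists_generic_finset hD.toFinset
  exact ⟨u, fun v hv => hu v (hD.mem_toFinset.mpr hv)⟩

lemma freiman_subset_span {d : ℕ} (u : Fin d → ℝ) (G : Set (Fin d → ℝ)) (hG : G.Finite)
    (hneg : ∀ g ∈ G, u ⬝ᵥ g < 0) :
    G ⊆ Submodule.span ℝ {g | g ∈ G ∧ ¬ ∃ h ∈ G, ∃ k ∈ G, g = h + k} := by
  classical
  set S := {g | g ∈ G ∧ ¬ ∃ h ∈ G, ∃ k ∈ G, g = h + k} with hS
  have main : ∀ n : ℕ, ∀ g ∈ G,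
      (hG.toFinset.filter fun x => u ⬝ᵥ g ≤ u ⬝ᵥ x).card ≤ n →
      g ∈ Submodule.span ℝ S := by
    intro n
    induction n with
    | zero =>
      intro g hg hcard
      exact absurd hcard (by
        simp only [Nat.le_zero, Finset.card_eq_zero, ← Finset.not_nonempty_iff_eq_empty]
        exact fun h => h ⟨g, Finset.mem_filter.mpr ⟨hG.mem_toFinset.mpr hg, le_rfl⟩⟩)
    | succ n ih =>
      intro g hg hcard
      by_cases hrep : ∃ h ∈ G, ∃ k ∈ G, g = h + k
      · obtain ⟨h, hh, k, hk, rfl⟩ := hrep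
        have key : ∀ w ∈ G, u ⬝ᵥ (h + k) < u ⬝ᵥ w →
            (hG.toFinset.filter fun x => u ⬝ᵥ w ≤ u ⬝ᵥ x).card ≤ n := by
          intro w hw hlt
          have hss : (hG.toFinset.filter fun x => u ⬝ᵥ w ≤ u ⬝ᵥ x) ⊂
              (hG.toFinset.filter fun x => u ⬝ᵥ (h + k) ≤ u ⬝ᵥ x) := by
            refine Finset.ssubset_iff_of_subset ?_ |>.mpr ?_
            · intro x hx
              obtain ⟨hx1, hx2⟩ := Finset.mem_filter.mp hx
              exact Finset.mem_filter.mpr ⟨hx1, le_trans (le_of_lt hlt) hx2⟩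
            · exact ⟨h + k, Finset.mem_filter.mpr ⟨hG.mem_toFinset.mpr hg, le_rfl⟩,
                fun hc => absurd (Finset.mem_filter.mp hc).2 (not_le.mpr hlt)⟩
          have := Finset.card_lt_card hss
          omega
        have hsum : u ⬝ᵥ (h + k) = u ⬝ᵥ h + u ⬝ᵥ k := dotProduct_add u h k
        have hhlt : u ⬝ᵥ (h + k) < u ⬝ᵥ h := by have := hneg k hk; linarith
        have hklt : u ⬝ᵥ (h + k) < u ⬝ᵥ k := by have := hneg h hh; linarith
        exact Submodule.add_mem _ (ih h hh (key h hh hhlt)) (ih k hk (key k hk hklt))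
      · exact Submodule.subset_span ⟨hg, hrep⟩
  exact fun g hg => main _ g hg le_rfl

lemma freiman_key {d : ℕ} (n : ℕ) : ∀ A : Set (Fin d → ℝ), A.Finite → A.Nonempty →
    A.ncard = n →
    2 * (finrank ℝ (vectorSpan ℝ A) + 1) * A.ncard ≤
      2 * (A + A).ncard + finrank ℝ (vectorSpan ℝ A) * (finrank ℝ (vectorSpan ℝ A) + 1) := by
  induction n using Nat.strong_induction_on with
  | _ n ih =>
  intro A hfin hne hcard
  have hDfin : ((fun p : (Fin d → ℝ) × (Fin d → ℝ) => p.1 - p.2) '' (A ×ˢ A)).Finite :=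
    (hfin.prod hfin).image _
  obtain ⟨u, hu⟩ := freiman_exists_generic _ hDfin
  obtain ⟨a, ha, hmax⟩ := Set.exists_max_image A (fun x => u ⬝ᵥ x) hfin hne
  have hstrict : ∀ x ∈ A, x ≠ a → u ⬝ᵥ x < u ⬝ᵥ a := by
    intro x hx hxa
    rcases lt_or_eq_of_le (hmax x hx) with h | h
    · exact h
    · exfalso
      have hd : x - a ∈ (fun p : _ × _ => p.1 - p.2) '' (A ×ˢ A) :=
        ⟨(x, a), Set.mk_mem_prod hx ha, rfl⟩
      have h2 := hu _ hd (sub_ne_zero.mpr hxa)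
      rw [dotProduct_sub] at h2
      exact h2 (by rw [h, sub_self])
  set A' := A \ {a} with hA'
  have hA'fin : A'.Finite := hfin.diff
  by_cases hA'ne : A'.Nonempty
  swap
  · have hAeq : A = {a} := by
      refine Set.eq_singleton_iff_unique_mem.mpr ⟨ha, ?_⟩
      intro x hx
      by_contra hxa
      exact hA'ne ⟨x, hx, hxa⟩
    rw [hAeq]
    rw [Set.singleton_add_singleton, vectorSpan_singleton]
    simp
  · have haA' : a ∉ A' := fun h => h.2 rfl
    have hA'sub : A' ⊆ A := Set.diff_subset
    have hAins : A = insert a A' := by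
      rw [hA', Set.insert_diff_singleton, Set.insert_eq_of_mem ha]
    set G := (fun x => x - a) '' A' with hGdef
    have hGfin : G.Finite := hA'fin.image _
    have hGneg : ∀ g ∈ G, u ⬝ᵥ g < 0 := by
      rintro g ⟨x, hx, rfl⟩
      rw [dotProduct_sub]
      have := hstrict x hx.1 (by simpa using hx.2)
      linarith
    have hspanG : Submodule.span ℝ G = vectorSpan ℝ A := by
      rw [vectorSpan_eq_span_vsub_set_right_ne ℝ ha]
      rfl
    set r := finrank ℝ (vectorSpan ℝ A) with hrdef
    set B := (A + A).ncard with hBdef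
    set B' := (A' + A').ncard with hB'def
    have hBfin : (A + A).Finite := hfin.add hfin
    have hB'fin : (A' + A').Finite := hA'fin.add hA'fin
    have hsub1 : A' + A' ⊆ A + A := Set.add_subset_add hA'sub hA'sub
    have hm : A'.ncard + 1 = n := by
      rw [← hcard, hA']
      exact Set.ncard_diff_singleton_add_one ha hfin
    have hIH := ih A'.ncard (by omega) A' hA'fin hA'ne rfl
    by_cases hcase : a ∈ affineSpan ℝ A'
    · -- dimension stays the same
      have hspan_eq : vectorSpan ℝ A' = vectorSpan ℝ A := by
        have h1 : affineSpan ℝ A = affineSpan ℝ A' := by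
          refine le_antisymm ?_ (affineSpan_mono ℝ hA'sub)
          rw [affineSpan_le]
          intro x hx
          by_cases hxa : x = a
          · rw [hxa]; exact hcase
          · exact subset_affineSpan ℝ A' ⟨hx, hxa⟩
        rw [← direction_affineSpan, ← direction_affineSpan, h1]
      set S := {g | g ∈ G ∧ ¬ ∃ h ∈ G, ∃ k ∈ G, g = h + k} with hSdef
      have hSsub : S ⊆ G := fun g hg => hg.1
      have hSfin : S.Finite := hGfin.subset hSsub
      have h0S : (0 : Fin d → ℝ) ∉ S := by
        rintro ⟨⟨c, hc, hceq⟩, -⟩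
        rw [sub_eq_zero] at hceq
        exact (by simpa using hc.2 : c ≠ a) hceq
      have hrS : r ≤ S.ncard := by
        have h1 : Submodule.span ℝ G ≤ Submodule.span ℝ S :=
          Submodule.span_le.mpr (freiman_subset_span u G hGfin hGneg)
        haveI := hSfin.fintype
        have h3 : finrank ℝ (Submodule.span ℝ S) ≤ S.ncard := by
          have := finrank_span_le_card (R := ℝ) S
          rwa [Set.ncard_eq_toFinset_card' S]
        calc r = finrank ℝ (Submodule.span ℝ G) := by rw [hspanG]
          _ ≤ finrank ℝ (Submodule.span ℝ S) := Submodule.finrank_mono h1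
          _ ≤ S.ncard := h3
      set T := (fun g => a + a + g) '' insert 0 S with hTdef
      have hTfin : T.Finite := (hSfin.insert 0).image _
      have hTsub : T ⊆ A + A := by
        rintro t ⟨g, hg, rfl⟩
        rcases Set.mem_insert_iff.mp hg with rfl | hgS
        · exact ⟨a, ha, a, ha, by show a + a = a + a + 0; rw [add_zero]⟩
        · obtain ⟨c, hc, rfl⟩ := hSsub hgS
          exact ⟨a, ha, c, hA'sub hc, by show a + c = a + a + (c - a); abel⟩
      have hdisj : Disjoint (A' + A') T := by
        rw [Set.disjoint_right]
        rintro t ⟨g, hg, rfl⟩ hmem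
        obtain ⟨y, hy, z, hz, hyz⟩ := Set.mem_add.mp hmem
        have hyz' : y + z = a + a + g := hyz
        have hgeq : g = (y - a) + (z - a) := by
          have h2 : a + a + ((y - a) + (z - a)) = y + z := by abel
          rw [hyz'] at h2
          exact (add_left_cancel h2).symm
        rcases Set.mem_insert_iff.mp hg with rfl | hgS
        · have h1 := hGneg _ ⟨y, hy, rfl⟩
          have h2 := hGneg _ ⟨z, hz, rfl⟩
          have h3 : u ⬝ᵥ (0 : Fin d → ℝ) = u ⬝ᵥ (y - a) + u ⬝ᵥ (z - a) := by
            rw [hgeq, dotProduct_add]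
          rw [dotProduct_zero] at h3
          linarith
        · exact hgS.2 ⟨y - a, ⟨y, hy, rfl⟩, z - a, ⟨z, hz, rfl⟩, hgeq⟩
      have hTcard : T.ncard = S.ncard + 1 := by
        rw [hTdef, Set.ncard_image_of_injective _ (add_right_injective (a + a)),
          Set.ncard_insert_of_notMem h0S hSfin]
      have hcard2 : B' + (S.ncard + 1) ≤ B := by
        rw [← hTcard, ← Set.ncard_union_eq hdisj hB'fin hTfin]
        exact Set.ncard_le_ncard (Set.union_subset hsub1 hTsub) hBfin
      rw [hspan_eq] at hIH
      rw [hcard]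
      nlinarith [hIH, hcard2, hrS, hm]
    · -- dimension drops
      obtain ⟨b, hb⟩ := hA'ne
      have hbmem : b ∈ affineSpan ℝ A' := subset_affineSpan ℝ A' hb
      have hab : a ≠ b := fun h => hcase (h ▸ hbmem)
      have hlt : vectorSpan ℝ A' < vectorSpan ℝ A := by
        refine lt_of_le_of_ne (vectorSpan_mono ℝ hA'sub) ?_
        intro heq
        apply hcase
        have h1 : a -ᵥ b ∈ vectorSpan ℝ A := vsub_mem_vectorSpan ℝ ha (hA'sub hb)
        rw [← heq] at h1
        have h2 := AffineSubspace.vadd_mem_of_mem_direction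
          (by rwa [direction_affineSpan] : a -ᵥ b ∈ (affineSpan ℝ A').direction) hbmem
        rwa [vsub_vadd] at h2
      have hrlt : finrank ℝ (vectorSpan ℝ A') < r :=
        Submodule.finrank_lt_finrank_of_lt hlt
      have hrle : r ≤ finrank ℝ (vectorSpan ℝ A') + 1 := by
        have h1 : vectorSpan ℝ A =
            Submodule.span ℝ {a -ᵥ b} ⊔ (affineSpan ℝ A').direction := by
          rw [hAins, ← direction_affineSpan, ← affineSpan_insert_affineSpan]
          exact AffineSubspace.direction_affineSpan_insert hbmem
        have h2 := Submodule.finrank_sup_add_finrank_inf_eq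
          (Submodule.span ℝ ({a -ᵥ b} : Set (Fin d → ℝ))) (affineSpan ℝ A').direction
        have h3 : finrank ℝ (Submodule.span ℝ ({a -ᵥ b} : Set (Fin d → ℝ))) = 1 :=
          finrank_span_singleton (by simpa [vsub_eq_sub, sub_eq_zero] using hab)
        have h4 : r = finrank ℝ
            ↥(Submodule.span ℝ ({a -ᵥ b} : Set (Fin d → ℝ)) ⊔ (affineSpan ℝ A').direction) := by
          rw [hrdef, h1]
        rw [direction_affineSpan] at h2 h4
        omega
      have hdisj : Disjoint (A' + A') ((fun x => a + x) '' A) := by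
        rw [Set.disjoint_right]
        rintro t ⟨x, hx, rfl⟩ hmem
        obtain ⟨y, hy, z, hz, hyz⟩ := Set.mem_add.mp hmem
        apply hcase
        by_cases hxa : x = a
        · subst hxa
          have hmid : x = ((1/2 : ℝ) • (y - z)) + z := by
            funext i
            have := congrFun hyz i
            simp only [Pi.add_apply, Pi.smul_apply, Pi.sub_apply, smul_eq_mul] at this ⊢
            linarith
          have hdir : ((1/2 : ℝ) • (y - z)) ∈ (affineSpan ℝ A').direction := by
            refine Submodule.smul_mem _ _ ?_
            have := AffineSubspace.vsub_mem_direction (subset_affineSpan ℝ A' hy)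
              (subset_affineSpan ℝ A' hz)
            rwa [vsub_eq_sub] at this
          have h2 := AffineSubspace.vadd_mem_of_mem_direction hdir
            (subset_affineSpan ℝ A' hz)
          rwa [vadd_eq_add, ← hmid] at h2
        · have hxA' : x ∈ A' := ⟨hx, hxa⟩
          have haeq : a = (y - x) + z := by
            funext i
            have := congrFun hyz i
            simp only [Pi.add_apply, Pi.sub_apply] at this ⊢
            linarith
          have hdir : (y - x) ∈ (affineSpan ℝ A').direction := by
            have := AffineSubspace.vsub_mem_direction (subset_affineSpan ℝ A' hy)
              (subset_affineSpan ℝ A' hxA')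
            rwa [vsub_eq_sub] at this
          have h2 := AffineSubspace.vadd_mem_of_mem_direction hdir
            (subset_affineSpan ℝ A' hz)
          rwa [vadd_eq_add, ← haeq] at h2
      have hcard2 : B' + n ≤ B := by
        have himg : ((fun x => a + x) '' A).ncard = n := by
          rw [Set.ncard_image_of_injective _ (add_right_injective a), hcard]
        rw [← himg, ← Set.ncard_union_eq hdisj hB'fin (hfin.image _)]
        refine Set.ncard_le_ncard (Set.union_subset hsub1 ?_) hBfin
        rintro t ⟨x, hx, rfl⟩
        exact ⟨a, ha, x, hx, rfl⟩
      have hr' : r = finrank ℝ (vectorSpan ℝ A') + 1 := by omega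
      rw [hcard, hr']
      nlinarith [hIH, hcard2, hm]

/-- Freiman's lemma: if a finite subset of `ℝ^d` affinely spanning `ℝ^d` satisfies
`|A + A| ≤ K|A|`, then `d ≤ K - 1 + d(d+1)/(2|A|)`. -/
theorem freiman_lemma (d : ℕ) (hd : 0 < d) (K : ℝ) (hK : 0 < K)
    (A : Set (Fin d → ℝ)) (hfin : A.Finite) (hne : A.Nonempty)
    (hspan : affineSpan ℝ A = ⊤)
    (h : ((A + A).ncard : ℝ) ≤ K * A.ncard) :
    (d : ℝ) ≤ K - 1 + (d * (d + 1)) / (2 * A.ncard) := by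
  have hr : finrank ℝ (vectorSpan ℝ A) = d := by
    rw [← direction_affineSpan, hspan, AffineSubspace.direction_top]
    rw [finrank_top]
    exact Module.finrank_fin_fun ℝ
  have key := freiman_key A.ncard A hfin hne rfl
  rw [hr] at key
  have hn : 0 < A.ncard := (Set.ncard_pos hfin).mpr hne
  have hnR : (0 : ℝ) < A.ncard := by exact_mod_cast hn
  have keyR : 2 * ((d : ℝ) + 1) * A.ncard ≤ 2 * ((A + A).ncard : ℝ) + d * (d + 1) := by
    exact_mod_cast key
  have h3 : (d : ℝ) + 1 - K ≤ (d * (d + 1)) / (2 * A.ncard) := by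
    rw [le_div_iff₀ (by positivity)]
    nlinarith
  linarith
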